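/- Let G be a finite group acting isometrically (each g acting as an isometry of ℝⁿ) and let X ∼ N(t₀, s²Id_{ℝⁿ}) be a Gaussian vector. If m⋆ is a global minimizer of F(m) = E(min_{g∈G} ‖g·X − m‖²), then the consistency bias satisfies d_Q([t₀],[m⋆]) ≤ s·sqrt(8·log|G|). -/

import Mathlib

open MeasureTheory ProbabilityTheory
open scoped NNReal

open scoped ENNReal RealInnerProductSpace


lemma auxStmt18_sq_le_exp {t : ℝ} (ht : 0 ≤ t) : t ^ 2 ≤ 2 * Real.exp t := by
  have h1 : t / 4 + 1 ≤ Real.exp (t / 4) := Real.add_one_le_exp _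
  have h2 : (1 + t / 4) ^ 4 ≤ Real.exp t := by
    calc (1 + t / 4) ^ 4 ≤ Real.exp (t / 4) ^ 4 := by
          apply pow_le_pow_left₀ (by linarith) (by linarith)
      _ = Real.exp t := by
          rw [← Real.exp_nat_mul]; ring_nf
  nlinarith [mul_nonneg ht (sq_nonneg (t - 2)), Real.exp_pos t]

lemma auxStmt18_sq_le (t : ℝ) : t ^ 2 ≤ 2 * Real.exp t + 2 * Real.exp (-t) := by
  rcases le_total 0 t with ht | ht
  · have := auxStmt18_sq_le_exp ht
    nlinarith [Real.exp_pos (-t)]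
  · have := auxStmt18_sq_le_exp (neg_nonneg.2 ht)
    nlinarith [Real.exp_pos t]

lemma auxStmt18_pdf_shift (c a : ℝ) (v : ℝ≥0) (hv : v ≠ 0) (x : ℝ) :
    Real.exp (a * x) * gaussianPDFReal c v x
      = Real.exp (a * c + v * a ^ 2 / 2) * gaussianPDFReal (c + a * v) v x := by
  have hv' : (v : ℝ) ≠ 0 := by exact_mod_cast hv
  unfold gaussianPDFReal
  rw [show ∀ K u : ℝ, Real.exp (a*x) * (K * Real.exp u) = K * Real.exp (a*x + u) by
        intro K u; rw [Real.exp_add]; ring,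
      show ∀ K u : ℝ, Real.exp (a*c + v*a^2/2) * (K * Real.exp u)
        = K * Real.exp ((a*c + v*a^2/2) + u) by
        intro K u; rw [Real.exp_add (a*c + v*a^2/2) u]; ring]
  congr 1
  field_simp
  ring

lemma auxStmt18_integrable_exp (c a : ℝ) (v : ℝ≥0) :
    Integrable (fun x => Real.exp (a * x)) (gaussianReal c v) := by
  by_cases hv : v = 0
  · rw [hv, gaussianReal_zero_var]
    refine (integrable_const (Real.exp (a * c))).congr ?_
    rw [ae_dirac_eq]
    exact Filter.eventually_pure.2 rfl
  · rw [gaussianReal_of_var_ne_zero c hv,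
      integrable_withDensity_iff (measurable_gaussianPDF c v)
        (ae_of_all _ fun x => ENNReal.ofReal_lt_top)]
    have : (fun x => Real.exp (a * x) * (gaussianPDF c v x).toReal)
        = fun x => Real.exp (a * c + v * a ^ 2 / 2) * gaussianPDFReal (c + a * v) v x := by
      funext x
      rw [gaussianPDF, ENNReal.toReal_ofReal (gaussianPDFReal_nonneg _ _ _),
        auxStmt18_pdf_shift c a v hv x]
    rw [this]
    exact (integrable_gaussianPDFReal _ _).const_mul _

lemma auxStmt18_integral_exp (c a : ℝ) (v : ℝ≥0) :
    ∫ x, Real.exp (a * x) ∂(gaussianReal c v) = Real.exp (a * c + v * a ^ 2 / 2) := by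
  by_cases hv : v = 0
  · rw [hv, gaussianReal_zero_var, integral_dirac]
    norm_num
  · have hpdf : gaussianPDF c v
        = fun x => (((gaussianPDFReal c v x).toNNReal : ℝ≥0) : ℝ≥0∞) := by
      funext x; rw [gaussianPDF, ENNReal.ofReal]
    rw [gaussianReal_of_var_ne_zero c hv, hpdf,
      integral_withDensity_eq_integral_smul
        ((measurable_gaussianPDFReal c v).real_toNNReal)]
    have : (fun x => ((gaussianPDFReal c v x).toNNReal : ℝ≥0)
          • Real.exp (a * x))
        = fun x => Real.exp (a * c + v * a ^ 2 / 2) * gaussianPDFReal (c + a * v) v x := by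
      funext x
      rw [NNReal.smul_def, smul_eq_mul, Real.coe_toNNReal _ (gaussianPDFReal_nonneg c v x),
        mul_comm, auxStmt18_pdf_shift c a v hv x]
    rw [this, integral_const_mul, integral_gaussianPDFReal_eq_one _ hv, mul_one]

lemma auxStmt18_integrable_sq (c : ℝ) (v : ℝ≥0) :
    Integrable (fun x => (x - c) ^ 2) (gaussianReal c v) := by
  have h1 : Integrable (fun x => 2 * (Real.exp (-c) * Real.exp (1 * x))
      + 2 * (Real.exp c * Real.exp ((-1) * x))) (gaussianReal c v) := by
    exact ((((auxStmt18_integrable_exp c 1 v).const_mul _).const_mul 2).add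
      (((auxStmt18_integrable_exp c (-1) v).const_mul _).const_mul 2))
  refine h1.mono' ((measurable_id.sub_const c).pow_const 2).aestronglyMeasurable (ae_of_all _ fun x => ?_)
  rw [Real.norm_eq_abs, abs_of_nonneg (sq_nonneg _)]
  have := auxStmt18_sq_le (x - c)
  rw [← Real.exp_add, ← Real.exp_add] at *
  calc (x - c) ^ 2 ≤ 2 * Real.exp (x - c) + 2 * Real.exp (-(x - c)) := auxStmt18_sq_le _
    _ = 2 * Real.exp (-c + 1 * x) + 2 * Real.exp (c + (-1) * x) := by ring_nf
    _ ≤ _ := by rw [Real.exp_add, Real.exp_add]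

lemma auxStmt18_pi_prod {ι : Type*} [Fintype ι] (m : ι → Measure ℝ)
    [∀ i, IsProbabilityMeasure (m i)] (f : ι → ℝ → ℝ) (hf : ∀ i, Integrable (f i) (m i)) :
    Integrable (fun y : ι → ℝ => ∏ i, f i (y i)) (Measure.pi m) ∧
      ∫ y : ι → ℝ, ∏ i, f i (y i) ∂(Measure.pi m) = ∏ i, ∫ x, f i x ∂(m i) := by
  constructor
  · exact Integrable.fintype_prod_dep (μ := m) hf
  · exact integral_fintype_prod_eq_prod (μ := m) f

lemma auxStmt18_integrable_eval {ι : Type*} [Fintype ι] (m : ι → Measure ℝ)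
    [∀ i, IsProbabilityMeasure (m i)] (i : ι) (f : ℝ → ℝ) (hf : Integrable f (m i)) :
    Integrable (fun y : ι → ℝ => f (y i)) (Measure.pi m) := by
  classical
  have h := (auxStmt18_pi_prod m (fun j => if j = i then f else fun _ => 1) ?_).1
  · have heq : (fun y : ι → ℝ => ∏ j, (if j = i then f else fun _ => (1:ℝ)) (y j))
        = fun y : ι → ℝ => f (y i) := by
      funext y
      rw [Finset.prod_eq_single i (fun b _ hb => by simp [hb]) (by simp)]
      simp
    rwa [heq] at h
  · intro j
    by_cases h : j = i
    · subst h; simpa using hf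
    · simpa [h] using (integrable_const (1:ℝ))

lemma auxStmt18_pi_dirac {ι : Type*} [Fintype ι] (c : ι → ℝ) :
    Measure.pi (fun i => Measure.dirac (c i)) = Measure.dirac c := by
  refine Measure.pi_eq fun s hs => ?_
  rw [Measure.dirac_apply' _ (MeasurableSet.univ_pi hs)]
  by_cases h : ∀ i, c i ∈ s i
  · rw [Set.indicator_of_mem (Set.mem_univ_pi.2 h)]
    simp only [Pi.one_apply]
    rw [Finset.prod_congr rfl fun i _ => by
      rw [Measure.dirac_apply' _ (hs i), Set.indicator_of_mem (h i)]]
    simp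
  · push_neg at h
    obtain ⟨i, hi⟩ := h
    rw [Set.indicator_of_notMem (by simp [Set.mem_univ_pi]; exact ⟨i, hi⟩)]
    rw [Finset.prod_eq_zero (Finset.mem_univ i)
      (by rw [Measure.dirac_apply' _ (hs i), Set.indicator_of_notMem hi])]

section Order
variable {ι : Type*} [Nonempty ι] [Finite ι]

lemma auxStmt18_exists_inf (f : ι → ℝ) : ∃ i, (⨅ j, f j) = f i ∧ ∀ j, f i ≤ f j := by
  obtain ⟨i, hi⟩ := Finite.exists_min f
  exact ⟨i, le_antisymm (ciInf_le (Set.finite_range f).bddBelow i) (le_ciInf hi), hi⟩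

lemma auxStmt18_exists_sup (f : ι → ℝ) : ∃ i, (⨆ j, f j) = f i ∧ ∀ j, f j ≤ f i := by
  obtain ⟨i, hi⟩ := Finite.exists_max f
  exact ⟨i, le_antisymm (ciSup_le hi) (le_ciSup (Set.finite_range f).bddAbove i), hi⟩

lemma auxStmt18_ciInf_comp {κ : Type*} (e : κ ≃ ι) (f : ι → ℝ) :
    ⨅ k, f (e k) = ⨅ i, f i := by
  haveI : Nonempty κ := e.nonempty
  haveI : Finite κ := Finite.of_equiv ι e.symm
  refine le_antisymm (le_ciInf fun i => ?_) (le_ciInf fun k => ciInf_le (Set.finite_range f).bddBelow (e k))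
  simpa using ciInf_le (Set.finite_range fun k => f (e k)).bddBelow (e.symm i)

lemma auxStmt18_ciInf_sq (f : ι → ℝ) (hf : ∀ i, 0 ≤ f i) :
    ⨅ i, (f i) ^ 2 = (⨅ i, f i) ^ 2 := by
  obtain ⟨i, hi, hmin⟩ := auxStmt18_exists_inf f
  rw [hi]
  refine le_antisymm (ciInf_le (Set.finite_range _).bddBelow i)
    (le_ciInf fun j => pow_le_pow_left₀ (hf i) (hmin j) 2)

lemma auxStmt18_ciInf_const_sub (c : ℝ) (f : ι → ℝ) :
    ⨅ i, (c - f i) = c - ⨆ i, f i := by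
  obtain ⟨i, hi, hmax⟩ := auxStmt18_exists_sup f
  rw [hi]
  refine le_antisymm (ciInf_le (Set.finite_range _).bddBelow i)
    (le_ciInf fun j => by linarith [hmax j])
end Order

set_option maxHeartbeats 2000000 in
/-- Upper bound of the consistency bias for a finite group acting by
isometries on `ℝⁿ` and Gaussian noise `X ∼ N(t₀, s² Id)`: if `m⋆` globally
minimizes the quotient variance then `d_Q([t₀],[m⋆]) ≤ s√(8 log|G|)`. -/
theorem stmt18 {n : ℕ} {G Ω : Type*} [Group G] [Fintype G]
    [MulAction G (EuclideanSpace ℝ (Fin n))]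
    (hiso : ∀ g : G, Isometry (fun x : EuclideanSpace ℝ (Fin n) => g • x))
    [MeasurableSpace Ω] (μ : Measure Ω) [IsProbabilityMeasure μ]
    (X : Ω → EuclideanSpace ℝ (Fin n)) (hmeas : Measurable X)
    (t₀ : EuclideanSpace ℝ (Fin n)) (s : ℝ≥0)
    (hgauss : Measure.map X μ
      = Measure.map (⇑(EuclideanSpace.equiv (Fin n) ℝ).symm)
          (Measure.pi fun i => gaussianReal (t₀ i) (s ^ 2)))
    (m₀ : EuclideanSpace ℝ (Fin n))
    (hmin : ∀ m : EuclideanSpace ℝ (Fin n),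
      (∫ ω, ⨅ g : G, dist (g • X ω) m₀ ^ 2 ∂μ)
        ≤ ∫ ω, ⨅ g : G, dist (g • X ω) m ^ 2 ∂μ) :
    (⨅ g : G, dist (g • t₀) m₀)
      ≤ s * Real.sqrt (8 * Real.log (Fintype.card G)) := by
  classical
  haveI : Nonempty G := ⟨1⟩
  set P : Measure (Fin n → ℝ) := Measure.pi fun i => gaussianReal (t₀ i) (s ^ 2) with hP_def
  set es : (Fin n → ℝ) → EuclideanSpace ℝ (Fin n)
    := ⇑(EuclideanSpace.equiv (Fin n) ℝ).symm with hes_def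
  have hes : Measurable es := (EuclideanSpace.equiv (Fin n) ℝ).symm.continuous.measurable
  have hbddB : ∀ f : G → ℝ, BddBelow (Set.range f) := fun f => (Set.finite_range f).bddBelow
  -- transfer of integrals through the law of X
  have htransInt : ∀ f : EuclideanSpace ℝ (Fin n) → ℝ, Measurable f →
      ((Integrable (fun ω => f (X ω)) μ ↔ Integrable (fun y => f (es y)) P) ∧
       ∫ ω, f (X ω) ∂μ = ∫ y, f (es y) ∂P) := by
    intro f hf
    constructor
    · have h1 := integrable_map_measure (μ := μ) (f := X) hf.aestronglyMeasurable
        hmeas.aemeasurable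
      rw [hgauss] at h1
      have h2 := integrable_map_measure (μ := P) (f := es) hf.aestronglyMeasurable
        hes.aemeasurable
      exact h1.symm.trans h2
    · have h1 := integral_map (φ := X) (μ := μ) hmeas.aemeasurable hf.aestronglyMeasurable
      rw [hgauss] at h1
      rw [← h1, integral_map hes.aemeasurable hf.aestronglyMeasurable]
  -- Gaussian moment generating function
  have hmgf : ∀ v : EuclideanSpace ℝ (Fin n),
      Integrable (fun ω => Real.exp ⟪X ω - t₀, v⟫) μ ∧
      ∫ ω, Real.exp ⟪X ω - t₀, v⟫ ∂μ = Real.exp ((s:ℝ)^2 * ‖v‖^2 / 2) := by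
    intro v
    have hfm : Measurable fun x : EuclideanSpace ℝ (Fin n) => Real.exp ⟪x - t₀, v⟫ :=
      (Real.continuous_exp.comp
        ((continuous_id.sub continuous_const).inner continuous_const)).measurable
    set f : (i : Fin n) → ℝ → ℝ := fun i t => Real.exp ((t - t₀ i) * v i) with hf_def
    have hfrw : ∀ i, f i = fun t => Real.exp (v i * t) * Real.exp (-(t₀ i * v i)) := by
      intro i; funext t; rw [hf_def, ← Real.exp_add]; ring_nf
    have hfint : ∀ i, Integrable (f i) (gaussianReal (t₀ i) (s^2)) := by
      intro i; rw [hfrw i]; exact (auxStmt18_integrable_exp _ _ _).mul_const _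
    have hfval : ∀ i, ∫ x, f i x ∂(gaussianReal (t₀ i) (s^2))
        = Real.exp ((s:ℝ)^2 * (v i)^2 / 2) := by
      intro i
      rw [hfrw i, integral_mul_const, auxStmt18_integral_exp, ← Real.exp_add]
      congr 1
      push_cast
      ring
    have hrw : (fun y : Fin n → ℝ => Real.exp ⟪es y - t₀, v⟫) = fun y => ∏ i, f i (y i) := by
      funext y
      rw [← Real.exp_sum]
      congr 1
      simp [es, PiLp.inner_apply, mul_comm]
    obtain ⟨hint, hval⟩ := auxStmt18_pi_prod (fun i => gaussianReal (t₀ i) (s^2)) f hfint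
    have hnorm : ‖v‖^2 = ∑ i, (v i)^2 := by
      rw [EuclideanSpace.norm_eq, Real.sq_sqrt (Finset.sum_nonneg fun i _ => sq_nonneg _)]
      simp [sq_abs]
    constructor
    · exact (htransInt _ hfm).1.mpr (by rw [hrw]; exact hint)
    · rw [(htransInt _ hfm).2, hrw, hval, Finset.prod_congr rfl fun i _ => hfval i,
        ← Real.exp_sum]
      congr 1
      rw [hnorm, Finset.mul_sum, Finset.sum_div]
  -- second moment
  have hI₁meas : Measurable fun x : EuclideanSpace ℝ (Fin n) => dist x t₀ ^ 2 :=
    (measurable_id.dist measurable_const).pow_const 2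
  have hI₁ : Integrable (fun ω => dist (X ω) t₀ ^ 2) μ := by
    refine (htransInt _ hI₁meas).1.mpr ?_
    have hrw : (fun y : Fin n → ℝ => dist (es y) t₀ ^ 2)
        = fun y => ∑ i, (y i - t₀ i)^2 := by
      funext y
      rw [EuclideanSpace.dist_eq, Real.sq_sqrt (Finset.sum_nonneg fun i _ => sq_nonneg _)]
      simp only [Real.dist_eq, sq_abs]
      rfl
    rw [hrw]
    exact integrable_finset_sum _ fun i _ =>
      auxStmt18_integrable_eval _ i (fun x => (x - t₀ i)^2) (auxStmt18_integrable_sq (t₀ i) (s^2))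
  -- basic quantities
  set d := ⨅ g : G, dist (g • t₀) m₀ with hd
  have hd0 : 0 ≤ d := le_ciInf fun g => dist_nonneg
  have hdist_flip : ∀ (g : G) (x y : EuclideanSpace ℝ (Fin n)),
      dist (g • x) y = dist x (g⁻¹ • y) := by
    intro g x y
    conv_lhs => rw [← smul_inv_smul g y]
    exact (hiso g).dist_eq x (g⁻¹ • y)
  have hudist : ∀ g : G, d ≤ dist (g • m₀) t₀ := by
    intro g
    calc d ≤ dist (g⁻¹ • t₀) m₀ := ciInf_le (hbddB _) g⁻¹
      _ = dist t₀ (g⁻¹⁻¹ • m₀) := hdist_flip g⁻¹ t₀ m₀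
      _ = dist (g • m₀) t₀ := by rw [inv_inv, dist_comm]
  set u : G → EuclideanSpace ℝ (Fin n) := fun g => g • m₀ - t₀ with hu_def
  have hu : ∀ g, d ≤ ‖u g‖ := by
    intro g
    rw [hu_def, ← dist_eq_norm]
    exact hudist g
  set Y : G → Ω → ℝ := fun g ω => 2 * ⟪X ω - t₀, u g⟫ - ‖u g‖^2 with hY_def
  set S : Ω → ℝ := fun ω => ⨆ g : G, Y g ω with hS_def
  have hterm : ∀ (x : EuclideanSpace ℝ (Fin n)) (g : G),
      dist x (g • m₀) ^ 2 = dist x t₀ ^ 2 - (2 * ⟪x - t₀, u g⟫ - ‖u g‖ ^ 2) := by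
    intro x g
    rw [dist_eq_norm, dist_eq_norm,
      show x - g • m₀ = (x - t₀) - u g from by rw [hu_def]; beta_reduce; abel,
      norm_sub_sq_real]
    ring
  have hpoint : ∀ ω, (⨅ g : G, dist (g • X ω) m₀ ^ 2) = dist (X ω) t₀ ^ 2 - S ω := by
    intro ω
    have h1 : (⨅ g : G, dist (g • X ω) m₀ ^ 2) = ⨅ g : G, dist (X ω) (g • m₀) ^ 2 := by
      simp_rw [hdist_flip]
      exact auxStmt18_ciInf_comp (Equiv.inv G) (fun h : G => dist (X ω) (h • m₀) ^ 2)
    rw [h1]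
    simp_rw [hterm (X ω)]
    exact auxStmt18_ciInf_const_sub _ _
  have hFmeas : ∀ m : EuclideanSpace ℝ (Fin n),
      Measurable fun x : EuclideanSpace ℝ (Fin n) => ⨅ g : G, dist (g • x) m ^ 2 :=
    fun m => Measurable.iInf fun g =>
      ((hiso g).continuous.measurable.dist measurable_const).pow_const 2
  have hInt_inf : ∀ m, Integrable (fun ω => ⨅ g : G, dist (g • X ω) m ^ 2) μ := by
    intro m
    have hb : Integrable (fun ω => 2 * dist (X ω) t₀ ^ 2 + 2 * dist t₀ m ^ 2) μ :=
      (hI₁.const_mul 2).add (integrable_const _)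
    refine hb.mono' ((hFmeas m).comp hmeas).aestronglyMeasurable (ae_of_all _ fun ω => ?_)
    rw [Real.norm_eq_abs, abs_of_nonneg (le_ciInf fun g => sq_nonneg _)]
    calc (⨅ g : G, dist (g • X ω) m ^ 2) ≤ dist ((1:G) • X ω) m ^ 2 := ciInf_le (hbddB _) 1
      _ = dist (X ω) m ^ 2 := by rw [one_smul]
      _ ≤ 2 * dist (X ω) t₀ ^ 2 + 2 * dist t₀ m ^ 2 := by
          nlinarith [dist_triangle (X ω) t₀ m, dist_nonneg (x := X ω) (y := t₀),
            dist_nonneg (x := t₀) (y := m), dist_nonneg (x := X ω) (y := m),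
            sq_nonneg (dist (X ω) t₀ - dist t₀ m)]
  have hS_int : Integrable S μ := by
    have hrw : S = fun ω => dist (X ω) t₀ ^ 2 - (⨅ g : G, dist (g • X ω) m₀ ^ 2) :=
      funext fun ω => by
        show S ω = dist (X ω) t₀ ^ 2 - (⨅ g : G, dist (g • X ω) m₀ ^ 2)
        have := hpoint ω; linarith
    rw [hrw]
    exact hI₁.sub (hInt_inf m₀)
  have hS_nonneg : 0 ≤ ∫ ω, S ω ∂μ := by
    have h2 : ∫ ω, (⨅ g : G, dist (g • X ω) t₀ ^ 2) ∂μ ≤ ∫ ω, dist (X ω) t₀ ^ 2 ∂μ := by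
      refine integral_mono (hInt_inf t₀) hI₁ fun ω => ?_
      calc (⨅ g : G, dist (g • X ω) t₀ ^ 2) ≤ dist ((1:G) • X ω) t₀ ^ 2 := ciInf_le (hbddB _) 1
        _ = dist (X ω) t₀ ^ 2 := by rw [one_smul]
    have h1 := hmin t₀
    have heq : ∫ ω, S ω ∂μ
        = ∫ ω, dist (X ω) t₀ ^ 2 ∂μ - ∫ ω, (⨅ g : G, dist (g • X ω) m₀ ^ 2) ∂μ := by
      rw [← integral_sub hI₁ (hInt_inf m₀)]
      exact integral_congr_ae (ae_of_all _ fun ω => by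
        show S ω = dist (X ω) t₀ ^ 2 - (⨅ g : G, dist (g • X ω) m₀ ^ 2)
        have := hpoint ω; linarith)
    rw [heq]
    linarith
  by_cases hs : s = 0
  · -- degenerate case : the law of X is a Dirac mass at t₀
    have hPd : Measure.map X μ = Measure.dirac t₀ := by
      rw [hgauss]
      have h0 : (fun i => gaussianReal (t₀ i) (s ^ 2)) = fun i => Measure.dirac (t₀ i) := by
        funext i
        rw [hs, show ((0:ℝ≥0) ^ 2) = 0 by norm_num, gaussianReal_zero_var]
      rw [hP_def, h0, auxStmt18_pi_dirac, Measure.map_dirac' hes]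
      rfl
    have hXae : ∀ᵐ ω ∂μ, X ω = t₀ := by
      have hsmeas : MeasurableSet ({t₀} : Set (EuclideanSpace ℝ (Fin n))) :=
        measurableSet_singleton _
      have h0 : μ (X ⁻¹' {t₀}ᶜ) = 0 := by
        rw [← Measure.map_apply hmeas hsmeas.compl, hPd,
          Measure.dirac_apply' _ hsmeas.compl, Set.indicator_of_notMem (by simp)]
      have hset : {ω | ¬ X ω = t₀} = X ⁻¹' {t₀}ᶜ := by ext ω; simp
      rw [ae_iff, hset]
      exact h0
    have hconst : ∀ m, ∫ ω, (⨅ g : G, dist (g • X ω) m ^ 2) ∂μ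
        = ⨅ g : G, dist (g • t₀) m ^ 2 := by
      intro m
      have hae : (fun ω => ⨅ g : G, dist (g • X ω) m ^ 2)
          =ᵐ[μ] fun _ => ⨅ g : G, dist (g • t₀) m ^ 2 :=
        hXae.mono fun ω hω => by
          show (⨅ g : G, dist (g • X ω) m ^ 2) = ⨅ g : G, dist (g • t₀) m ^ 2
          rw [hω]
      rw [integral_congr_ae hae, integral_const]
      simp
    have h := hmin t₀
    rw [hconst m₀, hconst t₀] at h
    have h2 : (⨅ g : G, dist (g • t₀) t₀ ^ 2) ≤ 0 := by
      calc (⨅ g : G, dist (g • t₀) t₀ ^ 2) ≤ dist ((1:G) • t₀) t₀ ^ 2 := ciInf_le (hbddB _) 1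
        _ = 0 := by rw [one_smul]; simp
    have h3 : d ^ 2 ≤ 0 := by
      rw [hd, ← auxStmt18_ciInf_sq _ (fun g : G => dist_nonneg)]
      linarith
    have hdz : d = 0 := by nlinarith
    rw [hdz]
    positivity
  · -- main case
    have hsne : (s:ℝ) ≠ 0 := by exact_mod_cast hs
    have hs' : (0:ℝ) < (s:ℝ) := lt_of_le_of_ne s.coe_nonneg (Ne.symm hsne)
    set L : ℝ := (4 * (s:ℝ)^2)⁻¹ with hL
    have hLpos : 0 < L := by positivity
    have hYexp : ∀ g : G, Integrable (fun ω => Real.exp (L * Y g ω)) μ ∧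
        ∫ ω, Real.exp (L * Y g ω) ∂μ
          = Real.exp (2*(s:ℝ)^2*L^2*‖u g‖^2 - L*‖u g‖^2) := by
      intro g
      have hw : ∀ ω, L * Y g ω = ⟪X ω - t₀, (2*L) • u g⟫ + (-(L * ‖u g‖^2)) := by
        intro ω
        rw [real_inner_smul_right, hY_def]
        ring
      have h1 := hmgf ((2*L) • u g)
      have hrw : (fun ω => Real.exp (L * Y g ω))
          = fun ω => Real.exp ⟪X ω - t₀, (2*L) • u g⟫ * Real.exp (-(L * ‖u g‖^2)) := by
        funext ω; rw [hw ω, Real.exp_add]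
      constructor
      · rw [hrw]; exact h1.1.mul_const _
      · rw [hrw, integral_mul_const, h1.2, ← Real.exp_add]
        congr 1
        rw [norm_smul, Real.norm_eq_abs, abs_of_pos (by positivity : (0:ℝ) < 2*L)]
        ring
    have hpt : ∀ ω, L * S ω ≤ (∑ g : G, Real.exp (L * Y g ω)) - 1 := by
      intro ω
      obtain ⟨g₀, hg₀, _⟩ := auxStmt18_exists_sup (fun g : G => Y g ω)
      have h1 : L * S ω + 1 ≤ Real.exp (L * S ω) := by
        have := Real.add_one_le_exp (L * S ω); linarith
      have hSω : S ω = Y g₀ ω := hg₀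
      have h2 : Real.exp (L * S ω) ≤ ∑ g : G, Real.exp (L * Y g ω) := by
        rw [hSω]
        exact Finset.single_le_sum (f := fun g : G => Real.exp (L * Y g ω))
          (fun g _ => (Real.exp_pos _).le) (Finset.mem_univ g₀)
      linarith
    have hint_mono : ∫ ω, L * S ω ∂μ ≤ ∫ ω, ((∑ g : G, Real.exp (L * Y g ω)) - 1) ∂μ :=
      integral_mono (hS_int.const_mul L)
        ((integrable_finset_sum _ fun g _ => (hYexp g).1).sub (integrable_const 1)) hpt
    have hlhs : 0 ≤ ∫ ω, L * S ω ∂μ := by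
      rw [integral_const_mul]
      exact mul_nonneg hLpos.le hS_nonneg
    have hrhseq : ∫ ω, ((∑ g : G, Real.exp (L * Y g ω)) - 1) ∂μ
        = (∑ g : G, Real.exp (2*(s:ℝ)^2*L^2*‖u g‖^2 - L*‖u g‖^2)) - 1 := by
      rw [integral_sub (integrable_finset_sum _ fun g _ => (hYexp g).1) (integrable_const 1),
        integral_finset_sum _ (fun g _ => (hYexp g).1)]
      congr 1
      · exact Finset.sum_congr rfl fun g _ => (hYexp g).2
      · simp
    have hterm_le : ∀ g : G, Real.exp (2*(s:ℝ)^2*L^2*‖u g‖^2 - L*‖u g‖^2)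
        ≤ Real.exp (-(d^2) / (8*(s:ℝ)^2)) := by
      intro g
      apply Real.exp_le_exp.2
      have hug2 : d^2 ≤ ‖u g‖^2 := pow_le_pow_left₀ hd0 (hu g) 2
      have heq : 2*(s:ℝ)^2*L^2*‖u g‖^2 - L*‖u g‖^2 = -(‖u g‖^2) / (8*(s:ℝ)^2) := by
        rw [hL]; field_simp; ring
      rw [heq]
      have h8 : (0:ℝ) < 8*(s:ℝ)^2 := by positivity
      exact (div_le_div_iff_of_pos_right h8).2 (by linarith)
    have hsum : (1:ℝ) ≤ (Fintype.card G : ℝ) * Real.exp (-(d^2) / (8*(s:ℝ)^2)) := by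
      have h0 : (0:ℝ) ≤ (∑ g : G, Real.exp (2*(s:ℝ)^2*L^2*‖u g‖^2 - L*‖u g‖^2)) - 1 :=
        le_trans hlhs (hrhseq ▸ hint_mono)
      have h2 : (∑ g : G, Real.exp (2*(s:ℝ)^2*L^2*‖u g‖^2 - L*‖u g‖^2))
          ≤ (Fintype.card G : ℝ) * Real.exp (-(d^2)/(8*(s:ℝ)^2)) := by
        calc _ ≤ ∑ _g : G, Real.exp (-(d^2)/(8*(s:ℝ)^2)) :=
              Finset.sum_le_sum fun g _ => hterm_le g
          _ = _ := by rw [Finset.sum_const, Finset.card_univ, nsmul_eq_mul]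
      linarith
    have hcard : (0:ℝ) < (Fintype.card G : ℝ) := by exact_mod_cast Fintype.card_pos
    have hlog : d^2 / (8*(s:ℝ)^2) ≤ Real.log (Fintype.card G) := by
      have hA : Real.exp (-(d^2)/(8*(s:ℝ)^2)) = (Real.exp (d^2/(8*(s:ℝ)^2)))⁻¹ := by
        rw [← Real.exp_neg]
        congr 1
        ring
      rw [hA] at hsum
      have hexp := Real.exp_pos (d^2/(8*(s:ℝ)^2))
      have hinv : (Real.exp (d^2/(8*(s:ℝ)^2)))⁻¹ * Real.exp (d^2/(8*(s:ℝ)^2)) = 1 :=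
        inv_mul_cancel₀ hexp.ne'
      rw [Real.le_log_iff_exp_le hcard]
      nlinarith [hsum, hinv, hexp]
    have hd2 : d^2 ≤ (s:ℝ)^2 * (8 * Real.log (Fintype.card G)) := by
      have h8 : (0:ℝ) < 8*(s:ℝ)^2 := by positivity
      calc d^2 = (d^2/(8*(s:ℝ)^2)) * (8*(s:ℝ)^2) := by field_simp
        _ ≤ Real.log (Fintype.card G) * (8*(s:ℝ)^2) :=
            mul_le_mul_of_nonneg_right hlog h8.le
        _ = (s:ℝ)^2 * (8*Real.log (Fintype.card G)) := by ring
    calc d = Real.sqrt (d^2) := (Real.sqrt_sq hd0).symm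
      _ ≤ Real.sqrt ((s:ℝ)^2 * (8 * Real.log (Fintype.card G))) := Real.sqrt_le_sqrt hd2
      _ = (s:ℝ) * Real.sqrt (8 * Real.log (Fintype.card G)) := by
          rw [Real.sqrt_mul (sq_nonneg _), Real.sqrt_sq s.coe_nonneg]
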